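/- Let (J^n) be a sequence of closed convex subsets of ℝ^d with Kuratowski limit J (also closed convex), and let Q be a d×d real matrix such that ker(Q) ⊆ J^n for all n and ker(Q) ⊆ J. Then the image sets satisfy Q·J = Lim_{n→∞} Q·J^n (Kuratowski limit). -/

import Mathlib

open Filter Topology ENNReal

noncomputable section

/-- Kuratowski lower limit: points whose distance to `J n` tends to zero. -/
def kurLiminf {d : ℕ} (J : ℕ → Set (EuclideanSpace ℝ (Fin d))) :
    Set (EuclideanSpace ℝ (Fin d)) :=
  {x | Tendsto (fun n => EMetric.infEdist x (J n)) atTop (𝓝 0)}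

/-- Kuratowski upper limit: points whose distance to `J n` has liminf zero. -/
def kurLimsup {d : ℕ} (J : ℕ → Set (EuclideanSpace ℝ (Fin d))) :
    Set (EuclideanSpace ℝ (Fin d)) :=
  {x | Filter.liminf (fun n => EMetric.infEdist x (J n)) atTop = 0}

/-- A closed convex set containing a submodule is stable under translation by the submodule. -/
lemma aux_add_mem_of_closed_convex {E : Type*} [NormedAddCommGroup E] [NormedSpace ℝ E]
    {C : Set E} (hCc : IsClosed C) (hCconv : Convex ℝ C) {L : Submodule ℝ E}
    (hL : (L : Set E) ⊆ C) {x u : E} (hx : x ∈ C) (hu : u ∈ L) : x + u ∈ C := by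
  have key : ∀ n : ℕ, (1 - ((n : ℝ) + 1)⁻¹) • x + u ∈ C := by
    intro n
    have hn0 : (0 : ℝ) < (n : ℝ) + 1 := by positivity
    have ht0 : (0 : ℝ) < ((n : ℝ) + 1)⁻¹ := by positivity
    have ht1 : ((n : ℝ) + 1)⁻¹ ≤ 1 := by
      rw [inv_le_one_iff₀]; right; linarith
    have hb : ((n : ℝ) + 1) • u ∈ C := hL (L.smul_mem _ hu)
    have h := hCconv hx hb (show (0:ℝ) ≤ 1 - ((n : ℝ) + 1)⁻¹ by linarith) ht0.le
      (show (1 - ((n : ℝ) + 1)⁻¹) + ((n : ℝ) + 1)⁻¹ = 1 by ring)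
    have heq : (1 - ((n : ℝ) + 1)⁻¹) • x + (((n : ℝ) + 1)⁻¹) • (((n : ℝ) + 1) • u)
        = (1 - ((n : ℝ) + 1)⁻¹) • x + u := by
      rw [smul_smul, inv_mul_cancel₀ hn0.ne', one_smul]
    rwa [heq] at h
  have hten : Tendsto (fun n : ℕ => (1 - ((n : ℝ) + 1)⁻¹) • x + u) atTop (𝓝 (x + u)) := by
    have h1 : Tendsto (fun n : ℕ => ((n : ℝ) + 1)⁻¹) atTop (𝓝 0) := by
      simpa using tendsto_one_div_add_atTop_nhds_zero_nat (𝕜 := ℝ)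
    have h2 : Tendsto (fun n : ℕ => (1 - ((n : ℝ) + 1)⁻¹)) atTop (𝓝 1) := by
      simpa using (tendsto_const_nhds (x := (1:ℝ))).sub h1
    have h3 : Tendsto (fun n : ℕ => (1 - ((n : ℝ) + 1)⁻¹) • x) atTop (𝓝 x) := by
      simpa using h2.smul_const x
    simpa using h3.add (tendsto_const_nhds (x := u))
  exact hCc.mem_of_tendsto hten (Eventually.of_forall key)

/-- If the closed convex sets `J^n` Kuratowski-converge to `J` and the kernel
of the matrix `Q` is contained in every `J^n` and in `J`, then the images
`Q·J^n` Kuratowski-converge to `Q·J`. -/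
theorem kuratowski_image_of_ker_subset {d : ℕ}
    (J : ℕ → Set (EuclideanSpace ℝ (Fin d))) (Jlim : Set (EuclideanSpace ℝ (Fin d)))
    (hJc : ∀ n, IsClosed (J n)) (hJconv : ∀ n, Convex ℝ (J n))
    (hc : IsClosed Jlim) (hconv : Convex ℝ Jlim)
    (hlow : kurLiminf J = Jlim) (hup : kurLimsup J = Jlim)
    (Q : Matrix (Fin d) (Fin d) ℝ)
    (hker : ∀ n, ∀ x : EuclideanSpace ℝ (Fin d),
      Matrix.toEuclideanLin Q x = 0 → x ∈ J n)
    (hkerlim : ∀ x : EuclideanSpace ℝ (Fin d),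
      Matrix.toEuclideanLin Q x = 0 → x ∈ Jlim) :
    kurLiminf (fun n => Matrix.toEuclideanLin Q '' J n) =
        Matrix.toEuclideanLin Q '' Jlim ∧
      kurLimsup (fun n => Matrix.toEuclideanLin Q '' J n) =
        Matrix.toEuclideanLin Q '' Jlim := by
  classical
  set f : EuclideanSpace ℝ (Fin d) →ₗ[ℝ] EuclideanSpace ℝ (Fin d) :=
    Matrix.toEuclideanLin Q with hf
  set f' : EuclideanSpace ℝ (Fin d) →L[ℝ] EuclideanSpace ℝ (Fin d) :=
    LinearMap.toContinuousLinearMap f with hf'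
  have hf'app : ∀ z : EuclideanSpace ℝ (Fin d), f' z = f z := fun z => rfl
  -- Step B : f '' Jlim ⊆ kurLiminf of images
  have hB : f '' Jlim ⊆ kurLiminf (fun n => f '' J n) := by
    rintro y ⟨x, hx, rfl⟩
    have hx' : x ∈ kurLiminf J := hlow.symm ▸ hx
    have hx'' : Tendsto (fun n => EMetric.infEdist x (J n)) atTop (𝓝 0) := hx'
    show Tendsto (fun n => EMetric.infEdist (f x) (f '' J n)) atTop (𝓝 0)
    rw [ENNReal.tendsto_nhds_zero]
    intro ε hε
    set K : ℝ≥0∞ := (‖f'‖₊ : ℝ≥0∞) + 1 with hK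
    have hK0 : K ≠ 0 := by simp [hK]
    have hKtop : K ≠ ⊤ := by simp [hK]
    have hδ : 0 < ε / K := ENNReal.div_pos (ne_of_gt hε) hKtop
    filter_upwards [(ENNReal.tendsto_nhds_zero.mp hx'') (ε / K) hδ,
        hx''.eventually_lt_const (show (0:ℝ≥0∞) < ε / K from hδ)] with n _ hn2
    obtain ⟨z, hz, hzd⟩ := EMetric.infEdist_lt_iff.mp hn2
    have h1 : EMetric.infEdist (f x) (f '' J n) ≤ edist (f x) (f z) :=
      EMetric.infEdist_le_edist_of_mem ⟨z, hz, rfl⟩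
    have h2 : edist (f x) (f z) ≤ (‖f'‖₊ : ℝ≥0∞) * edist x z := by
      simpa [hf'app] using f'.lipschitz.edist_le_mul x z
    calc EMetric.infEdist (f x) (f '' J n) ≤ (‖f'‖₊ : ℝ≥0∞) * edist x z := h1.trans h2
      _ ≤ K * (ε / K) := by
          apply mul_le_mul' _ hzd.le
          simp [hK, le_add_right]
      _ ≤ ε := ENNReal.mul_div_le
  -- Step C : kurLiminf ⊆ kurLimsup
  have hC : kurLiminf (fun n => f '' J n) ⊆ kurLimsup (fun n => f '' J n) := by
    intro y hy
    exact (hy : Tendsto _ _ _).liminf_eq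
  -- Step A : kurLimsup of images ⊆ f '' Jlim
  have hA : kurLimsup (fun n => f '' J n) ⊆ f '' Jlim := by
    intro y hy
    have hy' : liminf (fun n => EMetric.infEdist y (f '' J n)) atTop = 0 := hy
    have hfreq : ∀ k : ℕ, ∃ᶠ n in atTop,
        EMetric.infEdist y (f '' J n) < ((k : ℝ≥0∞) + 1)⁻¹ := by
      intro k
      refine frequently_lt_of_liminf_lt (by isBoundedDefault) ?_
      show liminf (fun n => EMetric.infEdist y (f '' J n)) atTop < ((k : ℝ≥0∞) + 1)⁻¹
      rw [hy']
      exact ENNReal.inv_pos.mpr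
        (ENNReal.add_ne_top.mpr ⟨ENNReal.natCast_ne_top k, ENNReal.one_ne_top⟩)
    obtain ⟨φ, hφmono, hφ⟩ := extraction_forall_of_frequently hfreq
    have hchoose : ∀ k : ℕ, ∃ x : EuclideanSpace ℝ (Fin d), x ∈ J (φ k) ∧ edist y (f x) < ((k : ℝ≥0∞) + 1)⁻¹ := by
      intro k
      obtain ⟨z, ⟨x, hxJ, rfl⟩, hzd⟩ := EMetric.infEdist_lt_iff.mp (hφ k)
      exact ⟨x, hxJ, hzd⟩
    choose x hxJ hxd using hchoose
    -- the images converge to y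
    have hinv : Tendsto (fun k : ℕ => ((k : ℝ≥0∞) + 1)⁻¹) atTop (𝓝 0) := by
      have h1 := ENNReal.tendsto_inv_nat_nhds_zero.comp (tendsto_add_atTop_nat 1)
      simpa [Function.comp_def, Nat.cast_add, Nat.cast_one] using h1
    have hyt : Tendsto (fun k => f (x k)) atTop (𝓝 y) := by
      rw [EMetric.tendsto_atTop]
      intro ε hε
      obtain ⟨N, hN⟩ := eventually_atTop.mp (hinv.eventually_lt_const hε)
      refine ⟨N, fun n hn => ?_⟩
      rw [edist_comm]
      exact (hxd n).trans (hN n hn)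
    -- kernel decomposition
    set Kk : Submodule ℝ (EuclideanSpace ℝ (Fin d)) := LinearMap.ker f with hKk
    have hKsub : ∀ n, (Kk : Set (EuclideanSpace ℝ (Fin d))) ⊆ J n := by
      intro n z hz
      exact hker n z (LinearMap.mem_ker.mp hz)
    set v : ℕ → EuclideanSpace ℝ (Fin d) := fun k => x k - (Kk.orthogonalProjection (x k) : EuclideanSpace ℝ (Fin d)) with hv
    have hvK : ∀ k, v k ∈ Kkᗮ := fun k => Kk.sub_starProjection_mem_orthogonal (x k)
    have hfv : ∀ k, f (v k) = f (x k) := by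
      intro k
      have hm : ((Kk.orthogonalProjection (x k) : EuclideanSpace ℝ (Fin d))) ∈ Kk := (Kk.orthogonalProjection (x k)).2
      simp only [hv, map_sub, LinearMap.mem_ker.mp hm, sub_zero]
    have hvJ : ∀ k, v k ∈ J (φ k) := by
      intro k
      have : x k + (-(Kk.orthogonalProjection (x k) : EuclideanSpace ℝ (Fin d))) ∈ J (φ k) :=
        aux_add_mem_of_closed_convex (hJc (φ k)) (hJconv (φ k)) (hKsub (φ k)) (hxJ k)
          (Kk.neg_mem (Kk.orthogonalProjection (x k)).2)
      simpa [hv, sub_eq_add_neg] using this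
    -- the restriction of f to Kkᗮ is injective
    set g : Kkᗮ →ₗ[ℝ] EuclideanSpace ℝ (Fin d) := f.comp Kkᗮ.subtype with hg
    have hginj : Function.Injective g := by
      intro a b hab
      have hmem : ((a : EuclideanSpace ℝ (Fin d)) - (b : EuclideanSpace ℝ (Fin d))) ∈ Kk := by
        rw [LinearMap.mem_ker, map_sub]
        simpa [hg, sub_eq_zero] using hab
      have hmem' : ((a : EuclideanSpace ℝ (Fin d)) - (b : EuclideanSpace ℝ (Fin d))) ∈ Kkᗮ := Kkᗮ.sub_mem a.2 b.2
      have : (a : EuclideanSpace ℝ (Fin d)) - (b : EuclideanSpace ℝ (Fin d)) = 0 := by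
        have := (Submodule.orthogonal_disjoint Kk).le_bot ⟨hmem, hmem'⟩
        simpa using this
      exact Subtype.ext (sub_eq_zero.mp this)
    set e := LinearEquiv.ofInjective g hginj with he
    set w : ℕ → Kkᗮ := fun k => ⟨v k, hvK k⟩ with hw
    have hgw : ∀ k, g (w k) = f (x k) := by
      intro k
      simpa [hg, hw] using hfv k
    have hgwt : Tendsto (fun k => g (w k)) atTop (𝓝 y) := by
      simpa [funext hgw] using hyt
    have hyrange : y ∈ LinearMap.range g := by
      have hcl : IsClosed ((LinearMap.range g : Submodule ℝ (EuclideanSpace ℝ (Fin d))) : Set (EuclideanSpace ℝ (Fin d))) :=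
        Submodule.closed_of_finiteDimensional _
      exact hcl.mem_of_tendsto hgwt (Eventually.of_forall fun k => ⟨w k, rfl⟩)
    set yR : LinearMap.range g := ⟨y, hyrange⟩ with hyR
    have hcont : Continuous fun z : LinearMap.range g => e.symm z :=
      e.symm.toLinearMap.continuous_of_finiteDimensional
    have h1 : Tendsto (fun k => (⟨g (w k), LinearMap.mem_range_self g (w k)⟩ :
        LinearMap.range g)) atTop (𝓝 yR) :=
      tendsto_subtype_rng.mpr hgwt
    have hwt : Tendsto w atTop (𝓝 (e.symm yR)) := by
      have h2 := (hcont.tendsto yR).comp h1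
      have h3 : ∀ k, e.symm ⟨g (w k), LinearMap.mem_range_self g (w k)⟩ = w k := by
        intro k
        have : (⟨g (w k), LinearMap.mem_range_self g (w k)⟩ : LinearMap.range g) = e (w k) :=
          Subtype.ext (by simp [he, LinearEquiv.ofInjective_apply])
        rw [this, e.symm_apply_apply]
      simpa [Function.comp_def, h3] using h2
    set vlim : EuclideanSpace ℝ (Fin d) := (e.symm yR : EuclideanSpace ℝ (Fin d)) with hvlim
    have hvt : Tendsto (fun k => v k) atTop (𝓝 vlim) := by
      have := (continuous_subtype_val.tendsto (e.symm yR)).comp hwt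
      simpa [hw, Function.comp_def] using this
    have hfvlim : f vlim = y := by
      have : g (e.symm yR) = y := by
        have h4 : (e (e.symm yR) : EuclideanSpace ℝ (Fin d)) = y := by rw [e.apply_symm_apply]
        rw [← h4]
        simp [he, LinearEquiv.ofInjective_apply]
      simpa [hg] using this
    -- vlim ∈ Jlim
    have hvlimJ : vlim ∈ Jlim := by
      rw [← hup]
      show liminf (fun n => EMetric.infEdist vlim (J n)) atTop = 0
      have hsub : Tendsto (fun k => EMetric.infEdist vlim (J (φ k))) atTop (𝓝 0) := by
        have hed : Tendsto (fun k => edist vlim (v k)) atTop (𝓝 0) := by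
          have := (tendsto_const_nhds (x := vlim)).edist hvt
          simpa using this
        apply tendsto_of_tendsto_of_tendsto_of_le_of_le tendsto_const_nhds hed
        · exact fun k => zero_le
        · exact fun k => EMetric.infEdist_le_edist_of_mem (hvJ k)
      apply le_antisymm _ zero_le
      apply ENNReal.le_of_forall_pos_le_add
      intro ε hε _
      rw [zero_add]
      refine liminf_le_of_frequently_le ?_ (by isBoundedDefault)
      apply (hφmono.tendsto_atTop).frequently
      apply Eventually.frequently
      exact (ENNReal.tendsto_nhds_zero.mp hsub) ε (by exact_mod_cast hε)
    exact ⟨vlim, hvlimJ, hfvlim⟩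
  -- conclude
  have heq1 : kurLiminf (fun n => f '' J n) = f '' Jlim :=
    Set.Subset.antisymm (hC.trans hA) hB
  have heq2 : kurLimsup (fun n => f '' J n) = f '' Jlim :=
    Set.Subset.antisymm hA (hB.trans hC)
  exact ⟨heq1, heq2⟩
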